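/- Let A ∈ ℝ^{n×n}, δ ≥ 0, and let U = Z(c_u; g_u^(1),…,g_u^(q)) be a zonotope in ℝ^n. For a vector w ∈ ℝ^n let Ã(w) ∈ ℝ^{(n+1)×(n+1)} denote the augmented matrix with upper-left block A, last column whose first n entries are w, and zero last row; let x̃₀ = e_{n+1} and P = [I_n 0] ∈ ℝ^{n×(n+1)}. Suppose that for each w ∈ {c_u, g_u^(1),…,g_u^(q)} there are Ṽ_w ∈ ℝ^{(n+1)×ξ}, H̃_w ∈ ℝ^{ξ×ξ}, and ε̃_w ≥ 0 with ‖exp(Ã(w) δ) x̃₀ − Ṽ_w exp(H̃_w δ) e₁‖ ≤ ε̃_w δ. Set c̃ = P Ṽ_{c_u} exp(H̃_{c_u} δ) e₁, g̃^(i) = P Ṽ_{g_u^(i)} exp(H̃_{g_u^(i)} δ) e₁, and r = (ε̃_{c_u} + Σ_{i=1}^q ε̃_{g_u^(i)}) δ. Then { (∫_0^δ exp(A t) dt) u : u ∈ U } ⊆ Z(c̃; g̃^(1),…,g̃^(q)) + { y ∈ ℝ^n : |y_j| ≤ r for all j }. -/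

import Mathlib

open Matrix Set Pointwise

/-- Matrix exponential of a real square matrix. -/
noncomputable def mexp {m : ℕ} (A : Matrix (Fin m) (Fin m) ℝ) : Matrix (Fin m) (Fin m) ℝ :=
  NormedSpace.exp A

/-- Euclidean norm of a vector in `ℝ^m`. -/
noncomputable def euclNorm {m : ℕ} (x : Fin m → ℝ) : ℝ :=
  ‖(show EuclideanSpace ℝ (Fin m) from WithLp.toLp 2 x)‖

/-- First standard basis vector of `ℝ^ξ`. -/
noncomputable def e1 {ξ : ℕ} [NeZero ξ] : Fin ξ → ℝ := Pi.single 0 1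

/-- The augmented matrix `Ã(w) = [[A, w], [0, 0]]`. -/
def aug {n : ℕ} (A : Matrix (Fin n) (Fin n) ℝ) (w : Fin n → ℝ) :
    Matrix (Fin (n + 1)) (Fin (n + 1)) ℝ :=
  Matrix.of fun i j =>
    Fin.lastCases 0 (fun i' => Fin.lastCases (w i') (fun j' => A i' j') j) i

/-- The entrywise integral `∫_0^t exp(A s) ds`. -/
noncomputable def intExp {n : ℕ} (A : Matrix (Fin n) (Fin n) ℝ) (t : ℝ) :
    Matrix (Fin n) (Fin n) ℝ :=
  Matrix.of fun i j => ∫ s in (0 : ℝ)..t, mexp (s • A) i j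

/-- Projection `P = [I 0]` onto the first `n` coordinates. -/
def proj {n : ℕ} (x : Fin (n + 1) → ℝ) : Fin n → ℝ := fun i => x i.castSucc

/-- The zonotope with center `c` and generators `g i`. -/
def zonotope {n : ℕ} {ι : Type*} [Fintype ι] (c : Fin n → ℝ) (g : ι → Fin n → ℝ) :
    Set (Fin n → ℝ) :=
  {x | ∃ β : ι → ℝ, (∀ i, β i ∈ Set.Icc (-1 : ℝ) 1) ∧ x = c + ∑ i, β i • g i}

open NormedSpace MeasureTheory

lemma exp_mulVec_apply {m : ℕ} (M : Matrix (Fin m) (Fin m) ℝ) (w : Fin m → ℝ) (j : Fin m) :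
    (mexp M *ᵥ w) j = ∑' (k : ℕ), ((k.factorial : ℝ))⁻¹ * ((M ^ k *ᵥ w) j) := by
  letI : SeminormedRing (Matrix (Fin m) (Fin m) ℝ) := Matrix.linftyOpSemiNormedRing
  letI : NormedRing (Matrix (Fin m) (Fin m) ℝ) := Matrix.linftyOpNormedRing
  letI : NormedAlgebra ℝ (Matrix (Fin m) (Fin m) ℝ) := Matrix.linftyOpNormedAlgebra
  let L : Matrix (Fin m) (Fin m) ℝ →ₗ[ℝ] ℝ :=
    { toFun := fun X => (X *ᵥ w) j
      map_add' := by intro X Y; simp [Matrix.add_mulVec]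
      map_smul' := by intro c X; simp [Matrix.smul_mulVec] }
  have hL : Continuous L := L.continuous_of_finiteDimensional
  have hs : Summable fun k : ℕ => ((k.factorial : ℝ))⁻¹ • M ^ k := expSeries_summable' M
  have h1 : ∑' (b : ℕ), L (((b.factorial : ℝ))⁻¹ • M ^ b)
      = L (∑' (b : ℕ), ((b.factorial : ℝ))⁻¹ • M ^ b) :=
    (hs.hasSum.map L.toAddMonoidHom hL).tsum_eq
  have h0 : (mexp M *ᵥ w) j = L (∑' (n : ℕ), ((n.factorial : ℝ))⁻¹ • M ^ n) := by
    rw [mexp, exp_eq_tsum ℝ]; rfl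
  rw [h0, ← h1]
  exact tsum_congr fun k => by simp [L, Matrix.smul_mulVec]

lemma summable_fact_mulVec {m : ℕ} (M : Matrix (Fin m) (Fin m) ℝ) (w : Fin m → ℝ) (j : Fin m) :
    Summable fun k : ℕ => ((k.factorial : ℝ))⁻¹ * ((M ^ k *ᵥ w) j) := by
  letI : SeminormedRing (Matrix (Fin m) (Fin m) ℝ) := Matrix.linftyOpSemiNormedRing
  letI : NormedRing (Matrix (Fin m) (Fin m) ℝ) := Matrix.linftyOpNormedRing
  letI : NormedAlgebra ℝ (Matrix (Fin m) (Fin m) ℝ) := Matrix.linftyOpNormedAlgebra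
  refine Summable.of_norm (Summable.of_nonneg_of_le (fun k => norm_nonneg _)
    (fun k => ?_) ((norm_expSeries_summable' (𝕂 := ℝ) M).mul_right ‖w‖))
  calc ‖((k.factorial : ℝ))⁻¹ * ((M ^ k *ᵥ w) j)‖
      = ‖((((k.factorial : ℝ))⁻¹ • M ^ k) *ᵥ w) j‖ := by
        simp [Matrix.smul_mulVec, norm_smul]
    _ ≤ ‖(((k.factorial : ℝ))⁻¹ • M ^ k) *ᵥ w‖ := norm_le_pi_norm _ j
    _ ≤ ‖((k.factorial : ℝ))⁻¹ • M ^ k‖ * ‖w‖ := Matrix.linfty_opNorm_mulVec _ _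

lemma single_last_eq_snoc {n : ℕ} :
    (Pi.single (Fin.last n) 1 : Fin (n + 1) → ℝ) = Fin.snoc (0 : Fin n → ℝ) (1 : ℝ) := by
  funext i
  refine Fin.lastCases ?_ (fun i' => ?_) i
  · simp
  · rw [Fin.snoc_castSucc, Pi.single_eq_of_ne (Fin.castSucc_lt_last i').ne]
    rfl

lemma aug_mulVec_snoc {n : ℕ} (A : Matrix (Fin n) (Fin n) ℝ) (w v : Fin n → ℝ) (t : ℝ) :
    aug A w *ᵥ Fin.snoc v t = Fin.snoc (A *ᵥ v + t • w) 0 := by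
  funext i
  refine Fin.lastCases ?_ (fun i' => ?_) i
  · simp [Matrix.mulVec, dotProduct, aug]
  · rw [Fin.snoc_castSucc]
    simp only [Matrix.mulVec, dotProduct, aug, Matrix.of_apply, Fin.lastCases_castSucc]
    rw [Fin.sum_univ_castSucc]
    simp [Matrix.mulVec, dotProduct, mul_comm]

lemma aug_pow_mulVec {n : ℕ} (A : Matrix (Fin n) (Fin n) ℝ) (w : Fin n → ℝ) (k : ℕ) :
    (aug A w) ^ (k + 1) *ᵥ Pi.single (Fin.last n) 1 = Fin.snoc (A ^ k *ᵥ w) 0 := by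
  induction k with
  | zero =>
    rw [pow_one, single_last_eq_snoc, aug_mulVec_snoc]
    simp
  | succ k ih =>
    rw [pow_succ', ← Matrix.mulVec_mulVec, ih, aug_mulVec_snoc]
    simp [Matrix.mulVec_mulVec, pow_succ']

lemma key {n : ℕ} (A : Matrix (Fin n) (Fin n) ℝ) {δ : ℝ} (hδ : 0 ≤ δ) (w : Fin n → ℝ) :
    intExp A δ *ᵥ w = proj (mexp (δ • aug A w) *ᵥ Pi.single (Fin.last n) 1) := by
  funext j
  set c : ℕ → ℝ := fun k => (A ^ k *ᵥ w) j with hcdef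
  set F : ℕ → ℝ → ℝ := fun k s => ((k.factorial : ℝ))⁻¹ * (s ^ k * c k) with hFdef
  have hcontM : Continuous fun s : ℝ => mexp (s • A) := by
    letI : SeminormedRing (Matrix (Fin n) (Fin n) ℝ) := Matrix.linftyOpSemiNormedRing
    letI : NormedRing (Matrix (Fin n) (Fin n) ℝ) := Matrix.linftyOpNormedRing
    letI : NormedAlgebra ℝ (Matrix (Fin n) (Fin n) ℝ) := Matrix.linftyOpNormedAlgebra
    letI : NormedAlgebra ℚ (Matrix (Fin n) (Fin n) ℝ) := NormedAlgebra.restrictScalars ℚ ℝ _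
    exact (exp_continuous (𝔸 := Matrix (Fin n) (Fin n) ℝ)).comp (continuous_id.smul continuous_const)
  have hcont : ∀ i l : Fin n, Continuous fun s : ℝ => mexp (s • A) i l := fun i l =>
    continuous_pi_iff.mp (continuous_pi_iff.mp hcontM i) l
  have hL1 : (intExp A δ *ᵥ w) j = ∑ i, (∫ s in (0 : ℝ)..δ, mexp (s • A) j i) * w i := rfl
  have hFcont : ∀ k : ℕ, Continuous (F k) := fun k => by
    simp only [hFdef]; fun_prop
  have hint : ∀ k : ℕ, Integrable (F k) (volume.restrict (Set.Ioc (0 : ℝ) δ)) := fun k =>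
    (hFcont k).integrableOn_Ioc
  have hFbound : ∀ k : ℕ, ∀ s ∈ Set.Ioc (0 : ℝ) δ,
      ‖‖F k s‖‖ ≤ ‖((k.factorial : ℝ))⁻¹ * (((δ • A) ^ k *ᵥ w) j)‖ := by
    intro k s hs
    have h1 : (((δ • A) ^ k *ᵥ w) j) = δ ^ k * c k := by
      simp [smul_pow, Matrix.smul_mulVec, hcdef]
    rw [norm_norm, h1, hFdef]
    have hsk : |s ^ k| ≤ |δ ^ k| := by
      rw [abs_pow, abs_pow]
      exact pow_le_pow_left₀ (abs_nonneg s)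
        (by rw [abs_of_pos hs.1, abs_of_nonneg hδ]; exact hs.2) k
    simp only [Real.norm_eq_abs]
    calc |(↑k.factorial : ℝ)⁻¹ * (s ^ k * c k)|
        = |(↑k.factorial : ℝ)⁻¹| * (|s ^ k| * |c k|) := by rw [abs_mul, abs_mul]
      _ ≤ |(↑k.factorial : ℝ)⁻¹| * (|δ ^ k| * |c k|) := by gcongr
      _ = |(↑k.factorial : ℝ)⁻¹ * (δ ^ k * c k)| := by rw [abs_mul, abs_mul]
  have hsum : Summable fun k : ℕ => ∫ s, ‖F k s‖ ∂(volume.restrict (Set.Ioc (0 : ℝ) δ)) := by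
    refine Summable.of_nonneg_of_le (fun k => integral_nonneg fun s => norm_nonneg _)
      (fun k => ?_)
      (((summable_fact_mulVec (δ • A) w j).abs.mul_right δ))
    have hb := norm_setIntegral_le_of_norm_le_const (μ := volume) (s := Set.Ioc (0 : ℝ) δ)
      (f := fun s => ‖F k s‖) (by simp) (hFbound k)
    calc ∫ s in Set.Ioc (0 : ℝ) δ, ‖F k s‖ ≤ ‖∫ s in Set.Ioc (0 : ℝ) δ, ‖F k s‖‖ := le_abs_self _
      _ ≤ ‖((k.factorial : ℝ))⁻¹ * (((δ • A) ^ k *ᵥ w) j)‖ * (volume (Set.Ioc (0 : ℝ) δ)).toReal := hb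
      _ = |((k.factorial : ℝ))⁻¹ * (((δ • A) ^ k *ᵥ w) j)| * δ := by
          rw [Real.volume_Ioc, sub_zero, ENNReal.toReal_ofReal hδ, Real.norm_eq_abs]
  have hswap : ∑' (k : ℕ), (∫ s in Set.Ioc (0 : ℝ) δ, F k s)
      = ∫ s in Set.Ioc (0 : ℝ) δ, ∑' (k : ℕ), F k s :=
    integral_tsum_of_summable_integral_norm hint hsum
  have hL : (intExp A δ *ᵥ w) j = ∑' (k : ℕ), ((k.factorial : ℝ))⁻¹ * (δ ^ (k + 1) / (k + 1) * c k) := by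
    rw [hL1]
    calc ∑ i, (∫ s in (0 : ℝ)..δ, mexp (s • A) j i) * w i
        = ∑ i, ∫ s in (0 : ℝ)..δ, mexp (s • A) j i * w i := by
          refine Finset.sum_congr rfl fun i _ => ?_
          rw [intervalIntegral.integral_mul_const]
      _ = ∫ s in (0 : ℝ)..δ, ∑ i, mexp (s • A) j i * w i :=
          (intervalIntegral.integral_finset_sum fun i _ =>
            ((hcont j i).mul continuous_const).intervalIntegrable _ _).symm
      _ = ∫ s in (0 : ℝ)..δ, ∑' (k : ℕ), F k s := by
          refine intervalIntegral.integral_congr fun s _ => ?_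
          have : ∑ i, mexp (s • A) j i * w i = (mexp (s • A) *ᵥ w) j := rfl
          rw [this, exp_mulVec_apply]
          refine tsum_congr fun k => ?_
          simp [hFdef, smul_pow, Matrix.smul_mulVec, hcdef]
      _ = ∫ s in Set.Ioc (0 : ℝ) δ, ∑' (k : ℕ), F k s := intervalIntegral.integral_of_le hδ
      _ = ∑' (k : ℕ), (∫ s in Set.Ioc (0 : ℝ) δ, F k s) := hswap.symm
      _ = ∑' (k : ℕ), ((k.factorial : ℝ))⁻¹ * (δ ^ (k + 1) / (k + 1) * c k) := by
          refine tsum_congr fun k => ?_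
          rw [← intervalIntegral.integral_of_le hδ, hFdef]
          simp only
          rw [intervalIntegral.integral_const_mul, intervalIntegral.integral_mul_const,
            integral_pow]
          ring
  have hR : proj (mexp (δ • aug A w) *ᵥ Pi.single (Fin.last n) 1) j
      = ∑' (k : ℕ), ((k.factorial : ℝ))⁻¹
          * (((δ • aug A w) ^ k *ᵥ Pi.single (Fin.last n) 1) (Fin.castSucc j)) :=
    exp_mulVec_apply _ _ _
  rw [hL, hR, Summable.tsum_eq_zero_add (summable_fact_mulVec (δ • aug A w) _ (Fin.castSucc j))]
  have h0term : ((δ • aug A w) ^ 0 *ᵥ Pi.single (Fin.last n) 1) (Fin.castSucc j) = 0 := by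
    rw [pow_zero, Matrix.one_mulVec, Pi.single_eq_of_ne (Fin.castSucc_lt_last j).ne]
  rw [h0term, mul_zero, zero_add]
  refine tsum_congr fun k => ?_
  have hterm : ((δ • aug A w) ^ (k + 1) *ᵥ Pi.single (Fin.last n) 1) (Fin.castSucc j)
      = δ ^ (k + 1) * (A ^ k *ᵥ w) j := by
    rw [smul_pow, Matrix.smul_mulVec, Pi.smul_apply, aug_pow_mulVec, smul_eq_mul,
      Fin.snoc_castSucc]
  rw [hterm, Nat.factorial_succ]
  push_cast
  rw [mul_inv]
  ring

lemma abs_le_enorm {m : ℕ} (x : Fin m → ℝ) (j : Fin m) : |x j| ≤ euclNorm x := by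
  rw [euclNorm, EuclideanSpace.norm_eq]
  have h1 : |x j| ^ 2 ≤ ∑ i, ‖x i‖ ^ 2 := by
    have := Finset.single_le_sum (f := fun i : Fin m => ‖x i‖ ^ 2)
      (fun i _ => sq_nonneg _) (Finset.mem_univ j)
    simpa [Real.norm_eq_abs, sq_abs] using this
  calc |x j| = Real.sqrt (|x j| ^ 2) := by rw [Real.sqrt_sq (abs_nonneg _)]
    _ ≤ _ := Real.sqrt_le_sqrt h1
/-- Reachable set for constant, uncertain inputs: the image of the
input zonotope `U` under `u ↦ (∫_0^δ exp(A t) dt) u` is contained in the Krylov zonotope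
`Z(c̃; g̃)` plus the error box of radius `(ε̃_c + Σᵢ ε̃ᵢ) δ`. -/
theorem stmt14 {n ξ q : ℕ} [NeZero ξ]
    (A : Matrix (Fin n) (Fin n) ℝ) (δ : ℝ) (hδ : 0 ≤ δ)
    (cu : Fin n → ℝ) (gu : Fin q → Fin n → ℝ)
    (Vc : Matrix (Fin (n + 1)) (Fin ξ) ℝ) (Hc : Matrix (Fin ξ) (Fin ξ) ℝ) (εc : ℝ)
    (Vg : Fin q → Matrix (Fin (n + 1)) (Fin ξ) ℝ)
    (Hg : Fin q → Matrix (Fin ξ) (Fin ξ) ℝ) (εg : Fin q → ℝ)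
    (hεc : 0 ≤ εc) (hεg : ∀ i, 0 ≤ εg i)
    (hc : euclNorm (mexp (δ • aug A cu) *ᵥ Pi.single (Fin.last n) 1
          - Vc *ᵥ (mexp (δ • Hc) *ᵥ e1)) ≤ εc * δ)
    (hg : ∀ i, euclNorm (mexp (δ • aug A (gu i)) *ᵥ Pi.single (Fin.last n) 1
          - Vg i *ᵥ (mexp (δ • Hg i) *ᵥ e1)) ≤ εg i * δ) :
    (fun u => intExp A δ *ᵥ u) '' zonotope cu gu ⊆
      zonotope (proj (Vc *ᵥ (mexp (δ • Hc) *ᵥ e1)))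
          (fun i => proj (Vg i *ᵥ (mexp (δ • Hg i) *ᵥ e1)))
        + {y : Fin n → ℝ | ∀ j, |y j| ≤ (εc + ∑ i, εg i) * δ} := by
  rintro x ⟨u, ⟨β, hβ, rfl⟩, rfl⟩
  set Ec : Fin (n + 1) → ℝ :=
    mexp (δ • aug A cu) *ᵥ Pi.single (Fin.last n) 1 - Vc *ᵥ (mexp (δ • Hc) *ᵥ e1) with hEc
  set Eg : Fin q → Fin (n + 1) → ℝ := fun i =>
    mexp (δ • aug A (gu i)) *ᵥ Pi.single (Fin.last n) 1 - Vg i *ᵥ (mexp (δ • Hg i) *ᵥ e1)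
    with hEg
  set ct : Fin n → ℝ := proj (Vc *ᵥ (mexp (δ • Hc) *ᵥ e1)) with hct
  set gt : Fin q → Fin n → ℝ := fun i => proj (Vg i *ᵥ (mexp (δ • Hg i) *ᵥ e1)) with hgt
  have hcu : intExp A δ *ᵥ cu = ct + proj Ec := by
    rw [key A hδ cu]
    funext j
    simp only [proj, Pi.add_apply, hEc, Pi.sub_apply, hct]
    ring
  have hgu : ∀ i, intExp A δ *ᵥ gu i = gt i + proj (Eg i) := by
    intro i
    rw [key A hδ (gu i)]
    funext j
    simp only [proj, Pi.add_apply, hEg, Pi.sub_apply, hgt]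
    ring
  have hsplit : intExp A δ *ᵥ (cu + ∑ i, β i • gu i)
      = (ct + ∑ i, β i • gt i) + (proj Ec + ∑ i, β i • proj (Eg i)) := by
    have hlin : intExp A δ *ᵥ (cu + ∑ i, β i • gu i)
        = intExp A δ *ᵥ cu + ∑ i, β i • (intExp A δ *ᵥ gu i) := by
      rw [Matrix.mulVec_add]
      congr 1
      rw [show (intExp A δ *ᵥ ∑ i, β i • gu i) = (intExp A δ).mulVecLin (∑ i, β i • gu i)
        from rfl, map_sum]
      refine Finset.sum_congr rfl fun i _ => ?_
      rw [LinearMap.map_smul, Matrix.mulVecLin_apply]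
    rw [hlin, hcu]
    have : ∀ i, β i • (intExp A δ *ᵥ gu i) = β i • gt i + β i • proj (Eg i) := by
      intro i; rw [hgu i, smul_add]
    rw [Finset.sum_congr rfl fun i _ => this i, Finset.sum_add_distrib]
    abel
  show intExp A δ *ᵥ (cu + ∑ i, β i • gu i) ∈ _
  rw [hsplit]
  refine Set.add_mem_add ⟨β, hβ, rfl⟩ ?_
  intro j
  have hβ1 : ∀ i, |β i| ≤ 1 := fun i => abs_le.2 ⟨(hβ i).1, (hβ i).2⟩
  have hEcj : |proj Ec j| ≤ εc * δ := le_trans (abs_le_enorm Ec j.castSucc) hc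
  have hEgj : ∀ i, |proj (Eg i) j| ≤ εg i * δ := fun i =>
    le_trans (abs_le_enorm (Eg i) j.castSucc) (hg i)
  calc |(proj Ec + ∑ i, β i • proj (Eg i)) j|
      = |proj Ec j + ∑ i, β i * proj (Eg i) j| := by
        simp [Finset.sum_apply]
    _ ≤ |proj Ec j| + |∑ i, β i * proj (Eg i) j| := abs_add_le _ _
    _ ≤ |proj Ec j| + ∑ i, |β i * proj (Eg i) j| :=
        add_le_add_right (Finset.abs_sum_le_sum_abs _ _) _
    _ ≤ εc * δ + ∑ i, εg i * δ := by
        refine add_le_add hEcj (Finset.sum_le_sum fun i _ => ?_)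
        rw [abs_mul]
        calc |β i| * |proj (Eg i) j| ≤ 1 * (εg i * δ) := by
              refine mul_le_mul (hβ1 i) (hEgj i) (abs_nonneg _) zero_le_one
          _ = εg i * δ := one_mul _
    _ = (εc + ∑ i, εg i) * δ := by rw [add_mul, Finset.sum_mul]
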